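/- Let H be a Hilbert space, B bounded self-adjoint with (Bw,w) ≥ c‖w‖² (c > 0), A bounded self-adjoint nonnegative, σ ≥ 1/2. If U^m satisfies B∂̄_tU^m + AU^{(σ)m} = 0 for 1 ≤ m ≤ M, then the second energy identity Σ_{m=1}^M (B∂̄_tU^m, ∂̄_tU^m)τ_m + (1/2)(AU^M, U^M) + Σ_{m=1}^M (σ-1/2)τ_m²(A∂̄_tU^m, ∂̄_tU^m) = (1/2)(AU^0, U^0) holds; in particular (AU^M, U^M) ≤ (AU^0, U^0). -/

import Mathlib

/-- second energy identity for the homogeneous two-level weighted scheme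
`B ∂̄_t U^m + A U^{(σ)m} = 0`, obtained by pairing with `∂̄_t U^m`. -/
theorem stmt_14 {H : Type*} [NormedAddCommGroup H] [InnerProductSpace ℝ H]
    [CompleteSpace H] (B A : H →L[ℝ] H)
    (hBsa : IsSelfAdjoint B) (c : ℝ) (hc : 0 < c)
    (hB : ∀ w : H, c * ‖w‖^2 ≤ inner ℝ (B w) w)
    (hAsa : IsSelfAdjoint A) (hA : ∀ w : H, (0:ℝ) ≤ inner ℝ (A w) w)
    (σ : ℝ) (hσ : 1/2 ≤ σ) (M : ℕ) (τ : ℕ → ℝ) (hτ : ∀ m, 0 < τ m)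
    (U : ℕ → H)
    (hscheme : ∀ m : ℕ, 1 ≤ m → m ≤ M →
      B ((τ m)⁻¹ • (U m - U (m-1))) + A (σ • U m + (1 - σ) • U (m-1)) = 0) :
    (∑ m ∈ Finset.Icc 1 M,
        (inner ℝ (B ((τ m)⁻¹ • (U m - U (m-1)))) ((τ m)⁻¹ • (U m - U (m-1))) : ℝ) * τ m
      + (1/2) * (inner ℝ (A (U M)) (U M) : ℝ)
      + ∑ m ∈ Finset.Icc 1 M,
          (σ - 1/2) * (τ m)^2 *
            (inner ℝ (A ((τ m)⁻¹ • (U m - U (m-1)))) ((τ m)⁻¹ • (U m - U (m-1))) : ℝ)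
      = (1/2) * (inner ℝ (A (U 0)) (U 0) : ℝ))
    ∧ (inner ℝ (A (U M)) (U M) : ℝ) ≤ (inner ℝ (A (U 0)) (U 0) : ℝ) := by
  have hAsym : ∀ x y : H, (inner ℝ (A x) y : ℝ) = inner ℝ (A y) x := by
    intro x y
    rw [show (inner ℝ (A x) y : ℝ) = inner ℝ x (A y) from hAsa.isSymmetric x y]
    exact real_inner_comm _ _
  set e : ℕ → ℝ := fun k => inner ℝ (A (U k)) (U k) with he
  set a : ℕ → ℝ := fun m =>
    (inner ℝ (B ((τ m)⁻¹ • (U m - U (m-1)))) ((τ m)⁻¹ • (U m - U (m-1))) : ℝ) * τ m with ha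
  set b : ℕ → ℝ := fun m =>
    (σ - 1/2) * (τ m)^2 *
      (inner ℝ (A ((τ m)⁻¹ • (U m - U (m-1)))) ((τ m)⁻¹ • (U m - U (m-1))) : ℝ) with hb
  have step : ∀ m, 1 ≤ m → m ≤ M → a m + b m = (1/2) * e (m-1) - (1/2) * e m := by
    intro m hm1 hmM
    have hτne : τ m ≠ 0 := (hτ m).ne'
    set d : H := U m - U (m-1) with hd
    set p : H := (τ m)⁻¹ • d with hp
    have hdp : d = τ m • p := by rw [hp, smul_smul, mul_inv_cancel₀ hτne, one_smul]
    have h0 : (inner ℝ (B p + A (σ • U m + (1-σ) • U (m-1))) d : ℝ) = 0 := by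
      rw [hscheme m hm1 hmM]; simp
    rw [inner_add_left] at h0
    have hU : σ • U m + (1-σ) • U (m-1)
        = (1/2 : ℝ) • (U m + U (m-1)) + (σ - 1/2) • d := by
      rw [hd]; module
    have hmid : (inner ℝ (A (U m + U (m-1))) d : ℝ) = e m - e (m-1) := by
      rw [hd, map_add, inner_add_left, inner_sub_right, inner_sub_right,
        hAsym (U m) (U (m-1))]
      simp only [he]; ring
    have h1 : (inner ℝ (A (σ • U m + (1-σ) • U (m-1))) d : ℝ)
        = (1/2) * (e m - e (m-1)) + (σ - 1/2) * inner ℝ (A d) d := by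
      rw [hU, map_add, inner_add_left, map_smul, map_smul,
        real_inner_smul_left, real_inner_smul_left, hmid]
    have h2 : (inner ℝ (B p) d : ℝ) = τ m * inner ℝ (B p) p := by
      rw [hdp, real_inner_smul_right]
    have h3 : (inner ℝ (A d) d : ℝ) = τ m * (τ m * inner ℝ (A p) p) := by
      conv_lhs => rw [hdp]
      rw [map_smul, real_inner_smul_left, real_inner_smul_right]
    rw [h1, h2, h3] at h0
    simp only [ha, hb, ← hd, ← hp]
    nlinarith [h0]
  have tel : ∀ N : ℕ, ∑ m ∈ Finset.Icc 1 N, ((1/2) * e (m-1) - (1/2) * e m)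
      = (1/2) * e 0 - (1/2) * e N := by
    intro N
    induction N with
    | zero => simp
    | succ n ih =>
      rw [Finset.sum_Icc_succ_top (Nat.one_le_iff_ne_zero.mpr (Nat.succ_ne_zero n)), ih]
      simp only [Nat.add_sub_cancel]
      ring
  have hsum : ∑ m ∈ Finset.Icc 1 M, (a m + b m) = (1/2) * e 0 - (1/2) * e M := by
    rw [Finset.sum_congr rfl (fun m hm => step m (Finset.mem_Icc.mp hm).1
      (Finset.mem_Icc.mp hm).2)]
    exact tel M
  rw [Finset.sum_add_distrib] at hsum
  have hanonneg : (0:ℝ) ≤ ∑ m ∈ Finset.Icc 1 M, a m := by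
    apply Finset.sum_nonneg
    intro m _
    have h1 := hB ((τ m)⁻¹ • (U m - U (m-1)))
    have h2 : (0:ℝ) ≤ c * ‖(τ m)⁻¹ • (U m - U (m-1))‖^2 := by positivity
    exact mul_nonneg (le_trans h2 h1) (hτ m).le
  have hbnonneg : (0:ℝ) ≤ ∑ m ∈ Finset.Icc 1 M, b m := by
    apply Finset.sum_nonneg
    intro m _
    have := hA ((τ m)⁻¹ • (U m - U (m-1)))
    have hσ' : (0:ℝ) ≤ σ - 1/2 := by linarith
    positivity
  constructor
  · linarith
  · linarith
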